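/- arXiv:2204.07315 — 6 statements merged into one kernel-verified Lean document; each statement's English description precedes it below -/
import Mathlib

section
/- If w : [0,1] → ℝ is concave and F̄ : [0,1] → (0,1] is log-concave, then among all cost share vectors (c₁,...,cₙ) with cᵢ ≥ 0 and ∑cᵢ = 1, the quantity F̄(c₁)·...·F̄(cₙ)·(w(c₁)+...+w(cₙ)) is maximized at c₁ = ... = cₙ = 1/n, provided w is nonnegative. -/
lemma jensen_aux (n : ℕ) (hn : 0 < n) (f : ℝ → ℝ)
    (hf : ConcaveOn ℝ (Set.Icc 0 1) f)
    (c : Fin n → ℝ) (hmem : ∀ i, c i ∈ Set.Icc (0:ℝ) 1) (hsum : ∑ i, c i = 1) :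
    ∑ i, f (c i) ≤ n * f (1 / n) := by
  have hn' : (0:ℝ) < n := Nat.cast_pos.mpr hn
  have h := hf.le_map_sum (t := Finset.univ) (w := fun _ : Fin n => 1 / (n:ℝ))
    (p := c) (fun i _ => by positivity)
    (by simp [Finset.sum_const]; field_simp) (fun i _ => hmem i)
  have hcenter : ∑ i, (1 / (n:ℝ)) • c i = 1 / n := by
    simp only [smul_eq_mul, ← Finset.mul_sum, hsum, mul_one]
  rw [hcenter] at h
  have : ∑ i, (1 / (n:ℝ)) • f (c i) = (1 / n) * ∑ i, f (c i) := by
    simp [Finset.mul_sum]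
  rw [this] at h
  calc ∑ i, f (c i) = n * ((1 / (n:ℝ)) * ∑ i, f (c i)) := by field_simp
    _ ≤ n * f (1 / n) := by
        exact mul_le_mul_of_nonneg_left h (le_of_lt hn')

/-- If `w` is concave and nonnegative and `F̄ : [0,1] → (0,1]` is
log-concave, then among all cost share vectors with `cᵢ ≥ 0`, `∑ cᵢ = 1`, the
quantity `∏ᵢ F̄(cᵢ) · ∑ᵢ w(cᵢ)` is maximized at `cᵢ = 1/n` for all `i`. -/
theorem stmt2 (n : ℕ) (hn : 0 < n) (Fbar w : ℝ → ℝ)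
    (hrange : ∀ x ∈ Set.Icc (0:ℝ) 1, Fbar x ∈ Set.Ioc (0:ℝ) 1)
    (hlogconc : ConcaveOn ℝ (Set.Icc 0 1) fun x => Real.log (Fbar x))
    (hwconc : ConcaveOn ℝ (Set.Icc 0 1) w)
    (hwnonneg : ∀ x ∈ Set.Icc (0:ℝ) 1, 0 ≤ w x)
    (c : Fin n → ℝ) (hc : ∀ i, 0 ≤ c i) (hsum : ∑ i, c i = 1) :
    (∏ i, Fbar (c i)) * (∑ i, w (c i)) ≤ Fbar (1 / n) ^ n * (n * w (1 / n)) := by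
  have hn' : (0:ℝ) < n := Nat.cast_pos.mpr hn
  have hmem : ∀ i, c i ∈ Set.Icc (0:ℝ) 1 := by
    intro i
    refine ⟨hc i, ?_⟩
    calc c i ≤ ∑ j, c j := Finset.single_le_sum (fun j _ => hc j) (Finset.mem_univ i)
      _ = 1 := hsum
  have hinvmem : (1 / (n:ℝ)) ∈ Set.Icc (0:ℝ) 1 := by
    constructor
    · positivity
    · rw [div_le_one hn']; exact_mod_cast hn
  have hpos : ∀ i, 0 < Fbar (c i) := fun i => (hrange _ (hmem i)).1
  have hFpos : 0 < Fbar (1 / n) := (hrange _ hinvmem).1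
  -- product bound via logs
  have hlog : ∑ i, Real.log (Fbar (c i)) ≤ n * Real.log (Fbar (1 / n)) :=
    jensen_aux n hn _ hlogconc c hmem hsum
  have hprod : (∏ i, Fbar (c i)) ≤ Fbar (1 / n) ^ n := by
    have h1 : (∏ i, Fbar (c i)) = Real.exp (∑ i, Real.log (Fbar (c i))) := by
      rw [Real.exp_sum]
      exact (Finset.prod_congr rfl fun i _ => (Real.exp_log (hpos i)).symm)
    have h2 : Fbar (1 / n) ^ n = Real.exp (n * Real.log (Fbar (1 / n))) := by
      rw [← Real.log_pow, Real.exp_log (pow_pos hFpos n)]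
    rw [h1, h2]
    exact Real.exp_le_exp.mpr hlog
  have hw : ∑ i, w (c i) ≤ n * w (1 / n) := jensen_aux n hn _ hwconc c hmem hsum
  have hwnn : 0 ≤ ∑ i, w (c i) :=
    Finset.sum_nonneg fun i _ => hwnonneg _ (hmem i)
  exact mul_le_mul hprod hw hwnn (pow_nonneg hFpos.le n)
end

section
/- If f is a Lipschitz continuous probability density on [0,1], then the probability of unanimous acceptance under the conservative equal costs mechanism, namely (1 - F(1/n))ⁿ where F is the CDF of f, converges to e^{-f(0)} as n → ∞. -/
open Filter Real Topology

/-- If `f` is a Lipschitz continuous probability density on `[0,1]`,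
then the probability of unanimous acceptance under the conservative equal costs
mechanism, `(1 - F(1/n))ⁿ` with `F` the CDF of `f`, converges to `exp (-f 0)`. -/
theorem stmt4 (f : ℝ → ℝ) (K : NNReal)
    (hLip : LipschitzOnWith K f (Set.Icc 0 1))
    (hnonneg : ∀ x ∈ Set.Icc (0:ℝ) 1, 0 ≤ f x)
    (hdens : ∫ x in (0:ℝ)..1, f x = 1) :
    Filter.Tendsto (fun n : ℕ => (1 - ∫ x in (0:ℝ)..(1 / (n:ℝ)), f x) ^ n)
      Filter.atTop (nhds (Real.exp (-f 0))) := by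
  set a : ℕ → ℝ := fun n => ∫ x in (0:ℝ)..(1 / (n:ℝ)), f x with ha
  have hcont : ContinuousOn f (Set.Icc 0 1) := hLip.continuousOn
  have h0mem : (0:ℝ) ∈ Set.Icc (0:ℝ) 1 := by constructor <;> norm_num
  -- key estimate
  have hbound : ∀ n : ℕ, 1 ≤ n → |a n - f 0 * (1 / n)| ≤ (K : ℝ) / n * (1 / n) := by
    intro n hn
    have hn0 : (0:ℝ) < n := by exact_mod_cast hn
    have hinv0 : (0:ℝ) < 1 / n := by positivity
    have hinv1 : (1:ℝ) / n ≤ 1 := by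
      rw [div_le_one hn0]; exact_mod_cast hn
    have hsub : Set.uIcc (0:ℝ) (1/n) ⊆ Set.Icc 0 1 := by
      rw [Set.uIcc_of_le hinv0.le]
      exact Set.Icc_subset_Icc le_rfl hinv1
    have hint : IntervalIntegrable f MeasureTheory.volume 0 (1/n) :=
      (hcont.mono hsub).intervalIntegrable
    have hconst : IntervalIntegrable (fun _ : ℝ => f 0) MeasureTheory.volume 0 (1/n) :=
      intervalIntegrable_const
    have heq : a n - f 0 * (1/n) = ∫ x in (0:ℝ)..(1/n), (f x - f 0) := by
      rw [intervalIntegral.integral_sub hint hconst, intervalIntegral.integral_const]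
      simp [ha, smul_eq_mul, one_div]
      ring
    rw [heq]
    have hb : ∀ x ∈ Set.uIoc (0:ℝ) (1/n), ‖f x - f 0‖ ≤ (K:ℝ) / n := by
      intro x hx
      rw [Set.uIoc_of_le hinv0.le] at hx
      have hxmem : x ∈ Set.Icc (0:ℝ) 1 := ⟨hx.1.le, hx.2.trans hinv1⟩
      have hd := hLip.dist_le_mul x hxmem 0 h0mem
      rw [Real.dist_eq, Real.dist_eq, sub_zero] at hd
      calc ‖f x - f 0‖ ≤ (K:ℝ) * |x| := hd
        _ ≤ (K:ℝ) * (1/n) := by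
            gcongr
            rw [abs_of_pos hx.1]; exact hx.2
        _ = (K:ℝ)/n := by ring
    have := intervalIntegral.norm_integral_le_of_norm_le_const hb
    calc |∫ x in (0:ℝ)..(1/n), (f x - f 0)| ≤ (K:ℝ)/n * |1/(n:ℝ) - 0| := this
      _ = (K:ℝ)/n * (1/n) := by rw [sub_zero, abs_of_pos hinv0]
  -- n * a n → f 0
  have hna : Tendsto (fun n : ℕ => (n : ℝ) * a n) atTop (𝓝 (f 0)) := by
    have hz : Tendsto (fun n : ℕ => (n : ℝ) * a n - f 0) atTop (𝓝 0) := by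
      refine squeeze_zero_norm' ?_ (tendsto_const_div_atTop_nhds_zero_nat (K:ℝ))
      filter_upwards [eventually_ge_atTop 1] with n hn
      have hn0 : (0:ℝ) < n := by exact_mod_cast hn
      have he : (n:ℝ) * a n - f 0 = (n:ℝ) * (a n - f 0 * (1/n)) := by
        field_simp
      rw [he, norm_mul, Real.norm_natCast]
      calc (n:ℝ) * ‖a n - f 0 * (1/n)‖ ≤ (n:ℝ) * ((K:ℝ)/n * (1/n)) :=
            mul_le_mul_of_nonneg_left (hbound n hn) hn0.le
        _ = (K:ℝ)/n := by field_simp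
    have := hz.add_const (f 0)
    simpa using this
  -- a n → 0
  have ha0 : Tendsto a atTop (𝓝 0) := by
    have h1 : Tendsto (fun n : ℕ => ((n:ℝ) * a n) * (1/n)) atTop (𝓝 (f 0 * 0)) :=
      hna.mul tendsto_one_div_atTop_nhds_zero_nat
    rw [mul_zero] at h1
    apply h1.congr'
    filter_upwards [eventually_ge_atTop 1] with n hn
    have hn0 : (0:ℝ) < n := by exact_mod_cast hn
    field_simp
  have hsmall : ∀ᶠ n : ℕ in atTop, |a n| < 1/2 := by
    have habs : Tendsto (fun n => |a n|) atTop (𝓝 0) := by simpa using ha0.abs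
    exact habs.eventually_lt_const (by norm_num)
  -- n * log (1 - a n) → - f 0
  have hdiff : Tendsto (fun n : ℕ => (n:ℝ) * Real.log (1 - a n) + (n:ℝ) * a n)
      atTop (𝓝 0) := by
    have hlim : Tendsto (fun n : ℕ => 2 * |(n:ℝ) * a n| * |a n|) atTop (𝓝 0) := by
      have : Tendsto (fun n : ℕ => 2 * |(n:ℝ) * a n| * |a n|) atTop (𝓝 (2 * |f 0| * |(0:ℝ)|)) :=
        (hna.abs.const_mul 2).mul ha0.abs
      simpa using this
    refine squeeze_zero_norm' ?_ hlim
    filter_upwards [hsmall] with n hn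
    have h1 : |a n + Real.log (1 - a n)| ≤ |a n|^2 / (1 - |a n|) := by
      have := Real.abs_log_sub_add_sum_range_le (x := a n) (by linarith [abs_nonneg (a n)]) 1
      simpa using this
    have h2 : |a n|^2 / (1 - |a n|) ≤ 2 * |a n|^2 := by
      rw [div_le_iff₀ (by linarith)]
      nlinarith [sq_nonneg (a n), abs_nonneg (a n), sq_abs (a n)]
    have he : (n:ℝ) * Real.log (1 - a n) + (n:ℝ) * a n
        = (n:ℝ) * (a n + Real.log (1 - a n)) := by ring
    rw [he, norm_mul, Real.norm_natCast]
    calc (n:ℝ) * ‖a n + Real.log (1 - a n)‖ ≤ (n:ℝ) * (2 * |a n|^2) := by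
          apply mul_le_mul_of_nonneg_left _ (Nat.cast_nonneg n)
          exact le_trans h1 h2
      _ = 2 * |(n:ℝ) * a n| * |a n| := by
          rw [abs_mul, Nat.abs_cast, pow_two]
          ring
  have hlog : Tendsto (fun n : ℕ => (n:ℝ) * Real.log (1 - a n)) atTop (𝓝 (-f 0)) := by
    have := hdiff.sub hna
    simpa using this
  have hexp : Tendsto (fun n : ℕ => Real.exp ((n:ℝ) * Real.log (1 - a n)))
      atTop (𝓝 (Real.exp (-f 0))) := (Real.continuous_exp.tendsto _).comp hlog
  apply hexp.congr'
  filter_upwards [hsmall] with n hn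
  have hpos : 0 < 1 - a n := by
    have h := abs_lt.mp hn
    linarith [h.2]
  rw [Real.exp_nat_mul, Real.exp_log hpos]
end

section
/- The expected max-delay of the serial cost sharing mechanism, which equals 1 - (∫_{1/n}^1 f(x) dx)ⁿ, converges to 1 - e^{-f(0)} as n → ∞ when f is Lipschitz continuous. -/
open Filter Real intervalIntegral

/-- The expected max-delay of the serial cost sharing mechanism,
`1 - (∫_{1/n}^1 f)ⁿ`, converges to `1 - exp (-f 0)` as `n → ∞`, for a Lipschitz
continuous positive density `f` on `[0,1]`. -/
theorem stmt5 (f : ℝ → ℝ) (K : NNReal)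
    (hLip : LipschitzOnWith K f (Set.Icc 0 1))
    (hpos : ∀ x ∈ Set.Icc (0:ℝ) 1, 0 < f x)
    (hdens : ∫ x in (0:ℝ)..1, f x = 1) :
    Filter.Tendsto (fun n : ℕ => 1 - (∫ x in (1 / (n:ℝ))..1, f x) ^ n)
      Filter.atTop (nhds (1 - Real.exp (-f 0))) := by
  have hcont : ContinuousOn f (Set.Icc 0 1) := hLip.continuousOn
  set a : ℕ → ℝ := fun n => ∫ x in (1 / (n:ℝ))..1, f x with ha
  set g : ℕ → ℝ := fun n => ∫ x in (0:ℝ)..(1 / (n:ℝ)), f x with hg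
  have hf0 : 0 < f 0 := hpos 0 (by simp)
  have hsplit : ∀ n : ℕ, 1 ≤ n → a n = 1 - g n := by
    intro n hn
    have h1n : (0:ℝ) < 1 / n := by positivity
    have h1n' : 1 / (n:ℝ) ≤ 1 := by
      rw [div_le_one (by positivity)]; exact_mod_cast hn
    have hint1 : IntervalIntegrable f MeasureTheory.volume 0 (1/n) := by
      apply ContinuousOn.intervalIntegrable
      apply hcont.mono
      rw [Set.uIcc_of_le h1n.le]
      exact Set.Icc_subset_Icc le_rfl h1n'
    have hint2 : IntervalIntegrable f MeasureTheory.volume (1/n) 1 := by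
      apply ContinuousOn.intervalIntegrable
      apply hcont.mono
      rw [Set.uIcc_of_le h1n']
      exact Set.Icc_subset_Icc h1n.le le_rfl
    have := intervalIntegral.integral_add_adjacent_intervals hint1 hint2
    rw [hdens] at this
    simp only [ha, hg]
    linarith
  have hgbound : ∀ n : ℕ, 1 ≤ n → |g n - f 0 / n| ≤ (K:ℝ) / n^2 := by
    intro n hn
    have hnpos : (0:ℝ) < n := by exact_mod_cast hn
    have h1n : (0:ℝ) < 1 / n := by positivity
    have h1n' : 1 / (n:ℝ) ≤ 1 := by
      rw [div_le_one hnpos]; exact_mod_cast hn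
    have hsub : Set.Icc (0:ℝ) (1/n) ⊆ Set.Icc 0 1 := Set.Icc_subset_Icc le_rfl h1n'
    have hint1 : IntervalIntegrable f MeasureTheory.volume 0 (1/n) := by
      apply ContinuousOn.intervalIntegrable
      apply hcont.mono
      rwa [Set.uIcc_of_le h1n.le]
    have hint0 : IntervalIntegrable (fun _ : ℝ => f 0) MeasureTheory.volume 0 (1/n) :=
      intervalIntegrable_const
    have key : g n - f 0 / n = ∫ x in (0:ℝ)..(1/n), (f x - f 0) := by
      rw [intervalIntegral.integral_sub hint1 hint0]
      simp [hg, div_eq_mul_inv, mul_comm]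
    rw [key]
    have hb : ∀ x ∈ Set.uIoc (0:ℝ) (1/n), ‖f x - f 0‖ ≤ (K:ℝ) / n := by
      intro x hx
      rw [Set.uIoc_of_le h1n.le] at hx
      have hx1 : x ∈ Set.Icc (0:ℝ) 1 := hsub ⟨hx.1.le, hx.2⟩
      have h0 : (0:ℝ) ∈ Set.Icc (0:ℝ) 1 := by simp
      have hd := hLip.dist_le_mul x hx1 0 h0
      rw [Real.dist_eq, Real.dist_eq, sub_zero] at hd
      rw [Real.norm_eq_abs]
      calc |f x - f 0| ≤ K * |x| := hd
        _ ≤ (K:ℝ) * (1/n) := by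
            apply mul_le_mul_of_nonneg_left _ K.coe_nonneg
            rw [abs_of_nonneg hx.1.le]; exact hx.2
        _ = (K:ℝ) / n := by ring
    have hni := intervalIntegral.norm_integral_le_of_norm_le_const hb
    rw [Real.norm_eq_abs] at hni
    calc |∫ x in (0:ℝ)..(1/n), (f x - f 0)| ≤ (K:ℝ)/n * |1/(n:ℝ) - 0| := hni
      _ = (K:ℝ)/n^2 := by
          rw [sub_zero, abs_of_nonneg h1n.le]; ring
  -- n * g n → f 0
  have hng : Tendsto (fun n : ℕ => (n:ℝ) * g n) atTop (nhds (f 0)) := by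
    have hK : Tendsto (fun n : ℕ => (K:ℝ) / n) atTop (nhds 0) :=
      tendsto_const_div_atTop_nhds_zero_nat _
    have hsq : Tendsto (fun n : ℕ => (n:ℝ) * g n - f 0) atTop (nhds 0) := by
      apply squeeze_zero_norm' _ hK
      filter_upwards [eventually_ge_atTop 1] with n hn
      have hnpos : (0:ℝ) < n := by exact_mod_cast hn
      have : (n:ℝ) * g n - f 0 = n * (g n - f 0 / n) := by field_simp
      rw [Real.norm_eq_abs, this, abs_mul, abs_of_nonneg hnpos.le]
      calc (n:ℝ) * |g n - f 0 / n| ≤ n * ((K:ℝ)/n^2) :=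
            mul_le_mul_of_nonneg_left (hgbound n hn) hnpos.le
        _ = (K:ℝ)/n := by field_simp
    simpa using hsq.add_const (f 0)
  have hgz : Tendsto g atTop (nhds 0) := by
    have h1 : Tendsto (fun n : ℕ => ((n:ℝ) * g n) * (1/n)) atTop (nhds (f 0 * 0)) :=
      hng.mul tendsto_one_div_atTop_nhds_zero_nat
    rw [mul_zero] at h1
    apply h1.congr'
    filter_upwards [eventually_ge_atTop 1] with n hn
    have hnpos : (0:ℝ) < n := by exact_mod_cast hn
    field_simp
  have hato : Tendsto a atTop (nhds 1) := by
    have h1 : Tendsto (fun n => 1 - g n) atTop (nhds (1 - 0)) :=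
      tendsto_const_nhds.sub hgz
    rw [sub_zero] at h1
    apply h1.congr'
    filter_upwards [eventually_ge_atTop 1] with n hn
    exact (hsplit n hn).symm
  -- eventually a n < 1 and a n > 0
  have hev_lt : ∀ᶠ n : ℕ in atTop, a n < 1 := by
    have hev : ∀ᶠ n : ℕ in atTop, (0:ℝ) < (n:ℝ) * g n :=
      hng.eventually (eventually_gt_nhds hf0)
    filter_upwards [hev, eventually_ge_atTop 1] with n h1 h2
    have hnpos : (0:ℝ) < n := by exact_mod_cast h2
    have hgpos : 0 < g n := by
      by_contra h
      push_neg at h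
      nlinarith
    rw [hsplit n h2]; linarith
  have hev_pos : ∀ᶠ n : ℕ in atTop, (0:ℝ) < a n :=
    hato.eventually (eventually_gt_nhds (by norm_num : (0:ℝ) < 1))
  -- n * (a n - 1) → -f 0
  have hna : Tendsto (fun n : ℕ => (n:ℝ) * (a n - 1)) atTop (nhds (-f 0)) := by
    have := hng.neg
    apply this.congr'
    filter_upwards [eventually_ge_atTop 1] with n hn
    rw [hsplit n hn]; ring
  -- slope of log at 1 along a n tends to 1
  have hslope : Tendsto (fun n : ℕ => slope Real.log 1 (a n)) atTop (nhds 1) := by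
    have hd : HasDerivAt Real.log 1 1 := by
      simpa using Real.hasDerivAt_log one_ne_zero
    have hsl := hasDerivAt_iff_tendsto_slope.mp hd
    apply hsl.comp
    rw [tendsto_nhdsWithin_iff]
    exact ⟨hato, hev_lt.mono fun n h => ne_of_lt h⟩
  -- n * log (a n) → -f 0
  have hnlog : Tendsto (fun n : ℕ => (n:ℝ) * Real.log (a n)) atTop (nhds (-f 0)) := by
    have h1 : Tendsto (fun n : ℕ => ((n:ℝ) * (a n - 1)) * slope Real.log 1 (a n))
        atTop (nhds (-f 0 * 1)) := hna.mul hslope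
    rw [mul_one] at h1
    apply h1.congr'
    filter_upwards [hev_lt] with n hn
    have hne : a n - 1 ≠ 0 := sub_ne_zero.mpr (ne_of_lt hn)
    simp only [slope_def_field, slope, Real.log_one, sub_zero, vsub_eq_sub, vadd_eq_add]
    field_simp
    linear_combination ((n:ℝ) * Real.log (a n)) * (mul_inv_cancel₀ hne)
  -- conclude
  have hexp : Tendsto (fun n : ℕ => Real.exp ((n:ℝ) * Real.log (a n))) atTop
      (nhds (Real.exp (-f 0))) := (Real.continuous_exp.tendsto _).comp hnlog
  have hfinal : Tendsto (fun n : ℕ => (a n) ^ n) atTop (nhds (Real.exp (-f 0))) := by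
    apply hexp.congr'
    filter_upwards [hev_pos] with n hn
    rw [← Real.log_pow, Real.exp_log (pow_pos hn n)]
  exact tendsto_const_nhds.sub hfinal
end

section
/- The optimal single deadline mechanism's expected max-delay approaches 0 as the number of agents approaches infinity: for every ε > 0, there exists a deadline d ≤ ε and N such that for all n ≥ N the single deadline mechanism M(d) with n agents has expected max-delay at most ε. -/
open scoped Classical

/-- Number of agents willing to pay `1/k` given scaled values `w`. -/
noncomputable def numWilling {n : ℕ} (w : Fin n → ℝ) (k : ℕ) : ℕ :=
  (Finset.univ.filter fun i : Fin n => 1 / (k : ℝ) ≤ w i).card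

/-- `K(w)`: the largest `k ∈ {1,...,n}` such that at least `k` of the values `w i`
are at least `1/k` (0 if none). -/
noncomputable def Kval {n : ℕ} (w : Fin n → ℝ) : ℕ :=
  Nat.findGreatest (fun k => k ≤ numWilling w k) n

/-- Number of agents other than `i` willing to pay `1/k`. -/
noncomputable def numWillingEx {n : ℕ} (w : Fin n → ℝ) (i : Fin n) (k : ℕ) : ℕ :=
  ((Finset.univ.erase i).filter fun j : Fin n => 1 / (k : ℝ) ≤ w j).card

/-- `K` computed excluding agent `i`. -/
noncomputable def KvalEx {n : ℕ} (w : Fin n → ℝ) (i : Fin n) : ℕ :=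
  Nat.findGreatest (fun k => k ≤ numWillingEx w i k) n

/-- Agent `i` consumes the non-free part `[0,d]` of the single deadline mechanism
`M(d)`: the cost share of the scaled values `d·v` succeeds and `i` is one of the
`K(d·v)` consumers (paying `1/K(d·v)`). -/
def nonfreeConsumer {n : ℕ} (d : ℝ) (v : Fin n → ℝ) (i : Fin n) : Prop :=
  1 ≤ Kval (fun j => d * v j) ∧ 1 / (Kval (fun j => d * v j) : ℝ) ≤ d * v i

/-- Agent `i` receives the free part `[d,1]` iff the other agents alone can
successfully cost share the non-free part, i.e. `I(d·v₋ᵢ) = 1`. -/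
def hasFreePart {n : ℕ} (d : ℝ) (v : Fin n → ℝ) (i : Fin n) : Prop :=
  1 ≤ KvalEx (fun j => d * v j) i

/-- Release time of agent `i` in `M(d)`: `0` if she receives both parts, `d` if
only the free part, `1 - d` if only the non-free part, `1` if neither. -/
noncomputable def releaseTime {n : ℕ} (d : ℝ) (v : Fin n → ℝ) (i : Fin n) : ℝ :=
  if nonfreeConsumer d v i then (if hasFreePart d v i then 0 else 1 - d)
  else (if hasFreePart d v i then d else 1)

/-- Payment of agent `i` in `M(d)`: `1/K(d·v)` if a non-free consumer, else `0`. -/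
noncomputable def payment {n : ℕ} (d : ℝ) (v : Fin n → ℝ) (i : Fin n) : ℝ :=
  if nonfreeConsumer d v i then 1 / (Kval (fun j => d * v j) : ℝ) else 0

/-- Expected max-delay of `M(d)` with `n` agents whose valuations are i.i.d. with
density `f` on `[0,1]`. -/
noncomputable def expectedMaxDelay (f : ℝ → ℝ) (n : ℕ) (d : ℝ) : ℝ :=
  ∫ v in (Set.univ.pi fun _ : Fin n => Set.Icc (0:ℝ) 1),
    (⨆ i, releaseTime d v i) * ∏ i, f (v i)


open MeasureTheory Finset in
private lemma sdm_indicator_box_prod {n : ℕ} (g : Fin n → ℝ → ℝ) :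
    (Set.univ.pi fun _ : Fin n => Set.Icc (0:ℝ) 1).indicator
      (fun v : Fin n → ℝ => ∏ i, g i (v i))
    = fun v => ∏ i, (Set.Icc (0:ℝ) 1).indicator (g i) (v i) := by
  funext v
  by_cases hv : v ∈ Set.univ.pi fun _ : Fin n => Set.Icc (0:ℝ) 1
  · rw [Set.indicator_of_mem hv]
    exact Finset.prod_congr rfl fun i _ =>
      (Set.indicator_of_mem (hv i (Set.mem_univ i)) (g i)).symm
  · rw [Set.indicator_of_notMem hv]
    rw [Set.mem_univ_pi] at hv
    push_neg at hv
    obtain ⟨i, hi⟩ := hv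
    exact (Finset.prod_eq_zero (Finset.mem_univ i)
      (Set.indicator_of_notMem hi (g i))).symm

open MeasureTheory Finset in
private lemma sdm_integrableOn_box_prod {n : ℕ} (g : Fin n → ℝ → ℝ)
    (hg : ∀ i, IntegrableOn (g i) (Set.Icc (0:ℝ) 1)) :
    IntegrableOn (fun v : Fin n → ℝ => ∏ i, g i (v i))
      (Set.univ.pi fun _ : Fin n => Set.Icc (0:ℝ) 1) := by
  have hbox : MeasurableSet (Set.univ.pi fun _ : Fin n => Set.Icc (0:ℝ) 1) :=
    MeasurableSet.univ_pi fun _ => measurableSet_Icc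
  rw [← integrable_indicator_iff hbox, sdm_indicator_box_prod]
  exact Integrable.fintype_prod fun i =>
    (integrable_indicator_iff measurableSet_Icc).2 (hg i)

open MeasureTheory Finset in
private lemma sdm_integral_box_prod {n : ℕ} (g : Fin n → ℝ → ℝ) :
    ∫ v in (Set.univ.pi fun _ : Fin n => Set.Icc (0:ℝ) 1), ∏ i, g i (v i)
      = ∏ i, ∫ x in Set.Icc (0:ℝ) 1, g i x := by
  have hbox : MeasurableSet (Set.univ.pi fun _ : Fin n => Set.Icc (0:ℝ) 1) :=
    MeasurableSet.univ_pi fun _ => measurableSet_Icc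
  rw [← integral_indicator hbox, sdm_indicator_box_prod,
    MeasureTheory.integral_fintype_prod_volume_eq_prod (ι := Fin n)
      (fun i => (Set.Icc (0:ℝ) 1).indicator (g i))]
  exact Finset.prod_congr rfl fun i _ => integral_indicator measurableSet_Icc

private lemma sdm_releaseTime_nonneg {n : ℕ} {d : ℝ} {v : Fin n → ℝ}
    (hd0 : 0 ≤ d) (hd1 : d ≤ 1) (i : Fin n) : 0 ≤ releaseTime d v i := by
  unfold releaseTime; split_ifs <;> linarith

private lemma sdm_releaseTime_le_one {n : ℕ} {d : ℝ} {v : Fin n → ℝ}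
    (hd0 : 0 ≤ d) (hd1 : d ≤ 1) (i : Fin n) : releaseTime d v i ≤ 1 := by
  unfold releaseTime; split_ifs <;> linarith

private lemma sdm_releaseTime_le_of_free {n : ℕ} {d : ℝ} {v : Fin n → ℝ} {i : Fin n}
    (hd0 : 0 ≤ d) (h : hasFreePart d v i) : releaseTime d v i ≤ d := by
  unfold releaseTime; split_ifs with h1
  · exact hd0
  · exact le_rfl

private lemma sdm_freePart_of_many {n : ℕ} {d c : ℝ} {k : ℕ} {v : Fin n → ℝ}
    (hd : 0 ≤ d) (hk1 : 1 ≤ k) (hkn : k ≤ n) (hkc : 1 / (k : ℝ) ≤ d * c)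
    (hcard : k + 1 ≤ (Finset.univ.filter fun i : Fin n => c ≤ v i).card)
    (i : Fin n) : hasFreePart d v i := by
  have hsub : ((Finset.univ.filter fun j : Fin n => c ≤ v j).erase i) ⊆
      ((Finset.univ.erase i).filter fun j : Fin n => 1 / (k : ℝ) ≤ d * v j) := by
    intro j hj
    rw [Finset.mem_erase, Finset.mem_filter] at hj
    rw [Finset.mem_filter, Finset.mem_erase]
    refine ⟨⟨hj.1, Finset.mem_univ j⟩, le_trans hkc ?_⟩
    exact mul_le_mul_of_nonneg_left hj.2.2 hd
  have h1 : k ≤ ((Finset.univ.filter fun j : Fin n => c ≤ v j).erase i).card := by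
    have := Finset.pred_card_le_card_erase
      (s := Finset.univ.filter fun j : Fin n => c ≤ v j) (a := i)
    omega
  have hnum : k ≤ numWillingEx (fun j => d * v j) i k :=
    le_trans h1 (Finset.card_le_card hsub)
  exact le_trans hk1 (Nat.le_findGreatest hkn hnum)

/-- The optimal single deadline mechanism's expected max-delay
approaches `0` as the number of agents approaches infinity: for every `ε > 0`,
there is a deadline `d ≤ ε` and `N` such that for all `n ≥ N` the mechanism
`M(d)` with `n` agents has expected max-delay at most `ε`. -/
theorem stmt8 (f : ℝ → ℝ)
    (hpos : ∀ x ∈ Set.Icc (0:ℝ) 1, 0 < f x)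
    (K : NNReal) (hLip : LipschitzOnWith K f (Set.Icc 0 1))
    (hdens : ∫ x in (0:ℝ)..1, f x = 1) :
    ∀ ε > 0, ∃ d : ℝ, 0 < d ∧ d ≤ ε ∧
      ∃ N : ℕ, ∀ n ≥ N, expectedMaxDelay f n d ≤ ε := by
  classical
  intro ε hε
  set d : ℝ := min (ε/2) (1/2) with hd_def
  have hd0 : 0 < d := lt_min (by linarith) (by norm_num)
  have hd2 : d ≤ 1/2 := min_le_right _ _
  have hd1 : d ≤ 1 := by linarith
  have hdε2 : d ≤ ε/2 := min_le_left _ _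
  have hdε : d ≤ ε := by linarith
  set k : ℕ := ⌈1/d⌉₊ + 1 with hk_def
  have hk1 : 1 ≤ k := Nat.le_add_left 1 _
  have hkR : (0:ℝ) < k := by positivity
  have hkd : 1 < (k:ℝ) * d := by
    have h1 : 1/d ≤ (⌈1/d⌉₊ : ℝ) := Nat.le_ceil _
    have h2 : ((⌈1/d⌉₊:ℝ)) < k := by rw [hk_def]; push_cast; linarith
    have : 1/d < (k:ℝ) := by linarith
    calc (1:ℝ) = (1/d) * d := by field_simp
    _ < (k:ℝ) * d := mul_lt_mul_of_pos_right this hd0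
  set c : ℝ := 1/((k:ℝ)*d) with hc_def
  have hc0 : 0 < c := by positivity
  have hc1 : c < 1 := by rw [hc_def, div_lt_one (by linarith)]; exact hkd
  have hkc : 1/(k:ℝ) ≤ d * c := le_of_eq (by
    rw [hc_def]
    have hdne : d ≠ 0 := ne_of_gt hd0
    have hkne : (k:ℝ) ≠ 0 := ne_of_gt hkR
    field_simp)
  -- analytic facts about f
  have hfc : ContinuousOn f (Set.Icc 0 1) := hLip.continuousOn
  have hfint : MeasureTheory.IntegrableOn f (Set.Icc (0:ℝ) 1) := hfc.integrableOn_Icc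
  have hint0c : IntervalIntegrable f MeasureTheory.volume 0 c := by
    apply ContinuousOn.intervalIntegrable
    apply hfc.mono
    rw [Set.uIcc_of_le hc0.le]
    exact Set.Icc_subset_Icc le_rfl hc1.le
  have hintc1 : IntervalIntegrable f MeasureTheory.volume c 1 := by
    apply ContinuousOn.intervalIntegrable
    apply hfc.mono
    rw [Set.uIcc_of_le hc1.le]
    exact Set.Icc_subset_Icc hc0.le le_rfl
  set q : ℝ := ∫ x in (0:ℝ)..c, f x with hq_def
  have hqpos : 0 < q :=
    intervalIntegral.intervalIntegral_pos_of_pos_on hint0c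
      (fun x hx => hpos x ⟨hx.1.le, hx.2.le.trans hc1.le⟩) hc0
  have htailpos : 0 < ∫ x in c..(1:ℝ), f x :=
    intervalIntegral.intervalIntegral_pos_of_pos_on hintc1
      (fun x hx => hpos x ⟨(hc0.trans hx.1).le, hx.2.le⟩) hc1
  have hq1 : q < 1 := by
    have hsum := intervalIntegral.integral_add_adjacent_intervals hint0c hintc1
    rw [hdens] at hsum
    linarith
  have hIccf : ∫ x in Set.Icc (0:ℝ) 1, f x = 1 := by
    rw [MeasureTheory.integral_Icc_eq_integral_Ioc,
      ← intervalIntegral.integral_of_le (by norm_num : (0:ℝ) ≤ 1)]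
    exact hdens
  have hIccInd : ∫ x in Set.Icc (0:ℝ) 1, (Set.Iio c).indicator f x = q := by
    rw [MeasureTheory.integral_indicator measurableSet_Iio,
      MeasureTheory.Measure.restrict_restrict measurableSet_Iio]
    have hset : Set.Iio c ∩ Set.Icc (0:ℝ) 1 = Set.Ico 0 c := by
      ext x
      simp only [Set.mem_inter_iff, Set.mem_Iio, Set.mem_Icc, Set.mem_Ico]
      constructor
      · rintro ⟨h1, h2, h3⟩; exact ⟨h2, h1⟩
      · rintro ⟨h1, h2⟩; exact ⟨h2, h1, by linarith⟩
    rw [hset, MeasureTheory.integral_Ico_eq_integral_Ioo, hq_def,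
      intervalIntegral.integral_of_le hc0.le, MeasureTheory.integral_Ioc_eq_integral_Ioo]
  -- the tail bound tends to zero
  have htail : Filter.Tendsto (fun n : ℕ => (n.choose (n - k) : ℝ) * q ^ (n - k))
      Filter.atTop (nhds 0) := by
    have hqabs : |q| < 1 := by rw [abs_of_nonneg hqpos.le]; exact hq1
    have hg : Filter.Tendsto (fun n : ℕ => ((n:ℝ)^k * q^n) * (q^k)⁻¹)
        Filter.atTop (nhds 0) := by
      have := (tendsto_pow_const_mul_const_pow_of_abs_lt_one k hqabs).mul_const (q^k)⁻¹
      simpa using this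
    apply squeeze_zero' ?_ ?_ hg
    · filter_upwards with n
      positivity
    · filter_upwards [Filter.eventually_ge_atTop k] with n hn
      have h1 : (n.choose (n-k) : ℝ) ≤ (n:ℝ)^k := by
        rw [Nat.choose_symm hn]
        exact_mod_cast Nat.choose_le_pow n k
      have h2 : q ^ (n - k) = q^n * (q^k)⁻¹ := pow_sub₀ q (ne_of_gt hqpos) hn
      calc (n.choose (n-k) : ℝ) * q ^ (n - k) ≤ (n:ℝ)^k * q ^ (n-k) :=
            mul_le_mul_of_nonneg_right h1 (by positivity)
      _ = ((n:ℝ)^k * q^n) * (q^k)⁻¹ := by rw [h2]; ring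
  have hev : ∀ᶠ n : ℕ in Filter.atTop,
      (n.choose (n - k) : ℝ) * q ^ (n - k) ≤ ε/2 ∧ k + 1 ≤ n := by
    filter_upwards [htail.eventually_le_const (by linarith : (0:ℝ) < ε/2),
      Filter.eventually_ge_atTop (k+1)] with n h1 h2
    exact ⟨h1, h2⟩
  obtain ⟨N, hN⟩ := Filter.eventually_atTop.1 hev
  refine ⟨d, hd0, hdε, N, ?_⟩
  intro n hn
  obtain ⟨hn1, hn2⟩ := hN n hn
  have hkn : k ≤ n := by omega
  have hne : Nonempty (Fin n) := ⟨⟨0, by omega⟩⟩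
  set box := Set.univ.pi fun _ : Fin n => Set.Icc (0:ℝ) 1 with hbox_def
  have hbox : MeasurableSet box := MeasurableSet.univ_pi fun _ => measurableSet_Icc
  set ψ : Finset (Fin n) → Fin n → ℝ → ℝ :=
    fun S i => if i ∈ S then (Set.Iio c).indicator f else f with hψ_def
  set G : (Fin n → ℝ) → ℝ := fun v =>
    d * ∏ i, f (v i) +
      ∑ S ∈ Finset.powersetCard (n - k) Finset.univ, ∏ i, ψ S i (v i) with hG_def
  have hψint : ∀ S : Finset (Fin n), ∀ i,
      MeasureTheory.IntegrableOn (ψ S i) (Set.Icc (0:ℝ) 1) := by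
    intro S i
    by_cases hi : i ∈ S
    · simp only [hψ_def, hi, if_true]
      exact hfint.indicator measurableSet_Iio
    · simp only [hψ_def, hi, if_false]
      exact hfint
  have hPint : MeasureTheory.IntegrableOn (fun v : Fin n → ℝ => ∏ i, f (v i)) box :=
    sdm_integrableOn_box_prod _ fun _ => hfint
  have hSint : MeasureTheory.IntegrableOn
      (fun v : Fin n → ℝ => ∑ S ∈ Finset.powersetCard (n - k) Finset.univ,
        ∏ i, ψ S i (v i)) box := by
    apply MeasureTheory.integrable_finset_sum
    intro S _
    exact sdm_integrableOn_box_prod _ (hψint S)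
  have hGint : MeasureTheory.IntegrableOn G box := by
    rw [hG_def]
    exact (hPint.const_mul d).add hSint
  -- pointwise bound
  have hpt : ∀ v ∈ box, (⨆ i, releaseTime d v i) * ∏ i, f (v i) ≤ G v := by
    intro v hv
    have hvi : ∀ i, v i ∈ Set.Icc (0:ℝ) 1 := fun i => hv i (Set.mem_univ i)
    have hP0 : 0 ≤ ∏ i, f (v i) :=
      Finset.prod_nonneg fun i _ => (hpos _ (hvi i)).le
    have hψ0 : ∀ S : Finset (Fin n), 0 ≤ ∏ i, ψ S i (v i) := by
      intro S
      apply Finset.prod_nonneg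
      intro i _
      by_cases hi : i ∈ S
      · simp only [hψ_def, hi, if_true]
        exact Set.indicator_apply_nonneg fun _ => (hpos _ (hvi i)).le
      · simp only [hψ_def, hi, if_false]
        exact (hpos _ (hvi i)).le
    have hsum0 : 0 ≤ ∑ S ∈ Finset.powersetCard (n - k) Finset.univ, ∏ i, ψ S i (v i) :=
      Finset.sum_nonneg fun S _ => hψ0 S
    by_cases hb : k + 1 ≤ (Finset.univ.filter fun i : Fin n => c ≤ v i).card
    · have hsup : (⨆ i, releaseTime d v i) ≤ d :=
        ciSup_le fun i => sdm_releaseTime_le_of_free hd0.le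
          (sdm_freePart_of_many hd0.le hk1 hkn hkc hb i)
      calc (⨆ i, releaseTime d v i) * ∏ i, f (v i) ≤ d * ∏ i, f (v i) :=
            mul_le_mul_of_nonneg_right hsup hP0
      _ ≤ G v := le_add_of_nonneg_right hsum0
    · -- bad event: bound by the sum term
      push_neg at hb
      have hsup1 : (⨆ i, releaseTime d v i) ≤ 1 :=
        ciSup_le fun i => sdm_releaseTime_le_one hd0.le hd1 i
      have hTcard : n - k ≤ (Finset.univ.filter fun i : Fin n => ¬ c ≤ v i).card := by
        have := Finset.card_filter_add_card_filter_not
          (s := (Finset.univ : Finset (Fin n))) (p := fun i => c ≤ v i)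
        rw [Finset.card_univ, Fintype.card_fin] at this
        omega
      obtain ⟨S₀, hS₀sub, hS₀card⟩ :=
        Finset.exists_subset_card_eq hTcard
      have hS₀mem : S₀ ∈ Finset.powersetCard (n - k) Finset.univ :=
        Finset.mem_powersetCard.2 ⟨Finset.subset_univ _, hS₀card⟩
      have hψS₀ : ∏ i, ψ S₀ i (v i) = ∏ i, f (v i) := by
        apply Finset.prod_congr rfl
        intro i _
        by_cases hi : i ∈ S₀
        · have hvc : v i ∈ Set.Iio c := by
            have := hS₀sub hi
            rw [Finset.mem_filter] at this
            exact Set.mem_Iio.2 (not_le.1 this.2)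
          simp only [hψ_def, hi, if_true]
          exact Set.indicator_of_mem hvc f
        · simp only [hψ_def, hi, if_false]
      have hsingle : ∏ i, f (v i) ≤
          ∑ S ∈ Finset.powersetCard (n - k) Finset.univ, ∏ i, ψ S i (v i) := by
        rw [← hψS₀]
        exact Finset.single_le_sum (fun S _ => hψ0 S) hS₀mem
      have hdP : 0 ≤ d * ∏ i, f (v i) := mul_nonneg hd0.le hP0
      calc (⨆ i, releaseTime d v i) * ∏ i, f (v i) ≤ 1 * ∏ i, f (v i) :=
            mul_le_mul_of_nonneg_right hsup1 hP0
      _ = ∏ i, f (v i) := one_mul _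
      _ ≤ G v := by rw [hG_def]; dsimp only; linarith
  -- integrate the bound
  have hmain : expectedMaxDelay f n d ≤ ∫ v in box, G v := by
    unfold expectedMaxDelay
    apply MeasureTheory.integral_mono_of_nonneg
    · filter_upwards [MeasureTheory.ae_restrict_mem hbox] with v hv
      exact mul_nonneg (Real.iSup_nonneg fun i => sdm_releaseTime_nonneg hd0.le hd1 i)
        (Finset.prod_nonneg fun i _ => (hpos _ (hv i (Set.mem_univ i))).le)
    · exact hGint
    · filter_upwards [MeasureTheory.ae_restrict_mem hbox] with v hv
      exact hpt v hv
  have hGval : ∫ v in box, G v = d + (n.choose (n - k) : ℝ) * q ^ (n - k) := by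
    rw [hG_def, MeasureTheory.integral_add (hPint.const_mul d) hSint,
      MeasureTheory.integral_const_mul,
      MeasureTheory.integral_finset_sum _ (fun S _ => sdm_integrableOn_box_prod _ (hψint S))]
    have h1 : ∫ v in box, ∏ i, f (v i) = 1 := by
      rw [hbox_def, sdm_integral_box_prod (fun _ => f)]
      simp [hIccf]
    have h2 : ∀ S ∈ Finset.powersetCard (n - k) (Finset.univ : Finset (Fin n)),
        (∫ v in box, ∏ i, ψ S i (v i)) = q ^ (n - k) := by
      intro S hS
      rw [hbox_def, sdm_integral_box_prod (ψ S)]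
      have : ∀ i, (∫ x in Set.Icc (0:ℝ) 1, ψ S i x) = if i ∈ S then q else 1 := by
        intro i
        by_cases hi : i ∈ S
        · simp only [hψ_def, hi, if_true]
          exact hIccInd
        · simp only [hψ_def, hi, if_false]
          exact hIccf
      rw [Finset.prod_congr rfl fun i _ => this i, Finset.prod_ite_mem,
        Finset.univ_inter, Finset.prod_const, (Finset.mem_powersetCard.1 hS).2]
    rw [Finset.sum_congr rfl h2, Finset.sum_const, Finset.card_powersetCard,
      Finset.card_univ, Fintype.card_fin, h1, mul_one, nsmul_eq_mul]
  rw [hGval] at hmain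
  linarith
end

section
/- The single deadline mechanism M(d) is strategy-proof and individually rational: no agent can increase her utility vᵢ(1 - tᵢ) - pᵢ by misreporting her valuation, and truthful reporting yields nonnegative utility. -/
open scoped Classical

section Aux

variable {n : ℕ}

lemma numWillingEx_congr (w w' : Fin n → ℝ) (i : Fin n)
    (h : ∀ j, j ≠ i → w j = w' j) (k : ℕ) :
    numWillingEx w i k = numWillingEx w' i k := by
  unfold numWillingEx
  congr 1
  apply Finset.filter_congr
  intro j hj
  rw [h j (Finset.ne_of_mem_erase hj)]

lemma numWilling_le_numWillingEx_add_one (w : Fin n → ℝ) (i : Fin n) (k : ℕ) :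
    numWilling w k ≤ numWillingEx w i k + 1 := by
  unfold numWilling numWillingEx
  have hsub : (Finset.univ.filter fun j : Fin n => 1 / (k : ℝ) ≤ w j)
      ⊆ insert i ((Finset.univ.erase i).filter fun j : Fin n => 1 / (k : ℝ) ≤ w j) := by
    intro j hj
    simp only [Finset.mem_filter, Finset.mem_insert, Finset.mem_erase, Finset.mem_univ,
      true_and, and_true] at *
    by_cases h : j = i
    · exact Or.inl h
    · exact Or.inr ⟨h, hj⟩
  calc (Finset.univ.filter fun j : Fin n => 1 / (k : ℝ) ≤ w j).card
      ≤ (insert i ((Finset.univ.erase i).filter fun j : Fin n => 1 / (k : ℝ) ≤ w j)).card :=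
        Finset.card_le_card hsub
    _ ≤ ((Finset.univ.erase i).filter fun j : Fin n => 1 / (k : ℝ) ≤ w j).card + 1 :=
        Finset.card_insert_le _ _

lemma numWillingEx_add_one_le (w : Fin n → ℝ) (i : Fin n) (k : ℕ)
    (h : 1 / (k : ℝ) ≤ w i) :
    numWillingEx w i k + 1 ≤ numWilling w k := by
  unfold numWilling numWillingEx
  have hnot : i ∉ (Finset.univ.erase i).filter fun j : Fin n => 1 / (k : ℝ) ≤ w j := by
    simp
  have hsub : insert i ((Finset.univ.erase i).filter fun j : Fin n => 1 / (k : ℝ) ≤ w j)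
      ⊆ Finset.univ.filter fun j : Fin n => 1 / (k : ℝ) ≤ w j := by
    intro j hj
    simp only [Finset.mem_insert, Finset.mem_filter, Finset.mem_erase, Finset.mem_univ,
      true_and] at *
    rcases hj with rfl | hj
    · exact h
    · exact hj.2
  calc ((Finset.univ.erase i).filter fun j : Fin n => 1 / (k : ℝ) ≤ w j).card + 1
      = (insert i ((Finset.univ.erase i).filter fun j : Fin n => 1 / (k : ℝ) ≤ w j)).card :=
        (Finset.card_insert_of_notMem hnot).symm
    _ ≤ (Finset.univ.filter fun j : Fin n => 1 / (k : ℝ) ≤ w j).card :=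
        Finset.card_le_card hsub

/-- The value of `K` that results whenever agent `i` is a non-free consumer. -/
noncomputable def Bval (w : Fin n → ℝ) (i : Fin n) : ℕ :=
  Nat.findGreatest (fun k => k ≤ numWillingEx w i k + 1) n

lemma Bval_congr (w w' : Fin n → ℝ) (i : Fin n) (h : ∀ j, j ≠ i → w j = w' j) :
    Bval w i = Bval w' i := by
  unfold Bval
  simp only [fun k => numWillingEx_congr w w' i h k]

lemma one_le_Bval (w : Fin n → ℝ) (i : Fin n) : 1 ≤ Bval w i :=
  Nat.le_findGreatest i.pos (Nat.succ_le_succ (Nat.zero_le _))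

lemma Kval_le_Bval (w : Fin n → ℝ) (i : Fin n) : Kval w ≤ Bval w i := by
  rcases Nat.eq_zero_or_pos (Kval w) with h | h
  · rw [h]; exact Nat.zero_le _
  · have hspec : Kval w ≤ numWilling w (Kval w) := by
      have h' : Kval w ≠ 0 := Nat.pos_iff_ne_zero.mp h
      unfold Kval at h' ⊢
      exact Nat.findGreatest_of_ne_zero (P := fun k => k ≤ numWilling w k) rfl h'
    have h2 : Kval w ≤ numWillingEx w i (Kval w) + 1 :=
      le_trans hspec (numWilling_le_numWillingEx_add_one w i (Kval w))
    exact Nat.le_findGreatest (Nat.findGreatest_le n) h2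

lemma Kval_eq_Bval (w : Fin n → ℝ) (i : Fin n) (h : 1 / ((Bval w i : ℕ) : ℝ) ≤ w i) :
    Kval w = Bval w i := by
  have hB1 : 1 ≤ Bval w i := one_le_Bval w i
  have hBspec : Bval w i ≤ numWillingEx w i (Bval w i) + 1 := by
    have h' : Bval w i ≠ 0 := by omega
    unfold Bval at h' ⊢
    exact Nat.findGreatest_of_ne_zero (P := fun k => k ≤ numWillingEx w i k + 1) rfl h'
  have hge : Bval w i ≤ numWilling w (Bval w i) :=
    le_trans hBspec (numWillingEx_add_one_le w i (Bval w i) h)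
  have h1 : Bval w i ≤ Kval w :=
    Nat.le_findGreatest (Nat.findGreatest_le n) hge
  exact le_antisymm (Kval_le_Bval w i) h1

end Aux

/-- The single deadline mechanism `M(d)` is strategy-proof and
individually rational: no agent can increase her utility `vᵢ(1 - tᵢ) - pᵢ` by
misreporting, and truthful reporting yields nonnegative utility. -/
theorem stmt13 {n : ℕ} (d : ℝ) (hd : d ∈ Set.Icc (0:ℝ) 1)
    (v : Fin n → ℝ) (hv : ∀ i, v i ∈ Set.Icc (0:ℝ) 1) (i : Fin n) :
    (∀ v' ∈ Set.Icc (0:ℝ) 1,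
      v i * (1 - releaseTime d (Function.update v i v') i)
          - payment d (Function.update v i v') i
        ≤ v i * (1 - releaseTime d v i) - payment d v i) ∧
    0 ≤ v i * (1 - releaseTime d v i) - payment d v i := by
  obtain ⟨hd0, hd1⟩ := hd
  obtain ⟨hvi0, hvi1⟩ := hv i
  -- utility decomposition
  have util : ∀ u : Fin n → ℝ,
      v i * (1 - releaseTime d u i) - payment d u i
        = (if nonfreeConsumer d u i then v i * d - 1 / (Kval (fun j => d * u j) : ℝ) else 0)
          + (if hasFreePart d u i then v i * (1 - d) else 0) := by
    intro u
    unfold releaseTime payment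
    by_cases h1 : nonfreeConsumer d u i <;> by_cases h2 : hasFreePart d u i <;>
      simp [h1, h2] <;> ring
  have hB1 : 1 ≤ Bval (fun j => d * v j) i := one_le_Bval _ i
  set B : ℕ := Bval (fun j => d * v j) i with hBdef
  have hBpos : (0:ℝ) < (B:ℝ) := by exact_mod_cast hB1
  -- key lemma: any report agreeing with v off i, if consumer then Kval = B
  have key : ∀ u : Fin n → ℝ, (∀ j, j ≠ i → u j = d * v j) →
      1 ≤ Kval u → 1 / (Kval u : ℝ) ≤ u i → Kval u = B := by
    intro u hu hK1 hKi
    have hBu : Bval u i = B := by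
      rw [hBdef]
      exact Bval_congr u _ i hu
    have hKB : Kval u ≤ Bval u i := Kval_le_Bval u i
    have hKpos : (0:ℝ) < (Kval u : ℝ) := by exact_mod_cast hK1
    have h1 : 1 / (Bval u i : ℝ) ≤ 1 / (Kval u : ℝ) := by
      apply one_div_le_one_div_of_le hKpos
      exact_mod_cast hKB
    have := Kval_eq_Bval u i (le_trans h1 hKi)
    rw [this, hBu]
  -- the free part is independent of i's report
  have hfree : ∀ v' : ℝ, hasFreePart d (Function.update v i v') i ↔ hasFreePart d v i := by
    intro v'
    have hnum : ∀ k, numWillingEx (fun j => d * Function.update v i v' j) i k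
        = numWillingEx (fun j => d * v j) i k := by
      intro k
      apply numWillingEx_congr
      intro j hj
      rw [Function.update_of_ne hj]
    unfold hasFreePart KvalEx
    simp only [hnum]
  have hfree_nonneg : (0:ℝ) ≤ (if hasFreePart d v i then v i * (1 - d) else 0) := by
    split
    · exact mul_nonneg hvi0 (by linarith)
    · exact le_refl 0
  -- truthful non-free utility
  have hvupd : ∀ (v' : ℝ) (j : Fin n), j ≠ i →
      d * Function.update v i v' j = d * v j := by
    intro v' j hj; rw [Function.update_of_ne hj]
  by_cases hwin : 1 / (B:ℝ) ≤ d * v i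
  · -- agent i wins truthfully
    have hKv : Kval (fun j => d * v j) = B := Kval_eq_Bval _ i hwin
    have hcons : nonfreeConsumer d v i := by
      refine ⟨by rw [hKv]; exact hB1, ?_⟩
      rw [hKv]; exact hwin
    have htn : (if nonfreeConsumer d v i then
        v i * d - 1 / (Kval (fun j => d * v j) : ℝ) else 0) = v i * d - 1 / (B:ℝ) := by
      rw [if_pos hcons, hKv]
    have htn_nonneg : (0:ℝ) ≤ v i * d - 1 / (B:ℝ) := by
      have : d * v i = v i * d := mul_comm d (v i)
      linarith [hwin]
    constructor
    · intro v' _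
      rw [util, util, htn, hfree v']
      have : (if nonfreeConsumer d (Function.update v i v') i then
          v i * d - 1 / (Kval (fun j => d * Function.update v i v' j) : ℝ) else 0)
          ≤ v i * d - 1 / (B:ℝ) := by
        split
        · rename_i h
          obtain ⟨h1, h2⟩ := h
          rw [key _ (hvupd v') h1 h2]
        · exact htn_nonneg
      linarith
    · rw [util, htn]
      linarith
  · -- agent i loses truthfully
    have hnotcons : ¬ nonfreeConsumer d v i := by
      rintro ⟨h1, h2⟩
      exact hwin (by rw [← key _ (fun j hj => rfl) h1 h2]; exact h2)
    have htn : (if nonfreeConsumer d v i then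
        v i * d - 1 / (Kval (fun j => d * v j) : ℝ) else 0) = 0 := if_neg hnotcons
    constructor
    · intro v' _
      rw [util, util, htn, hfree v']
      have : (if nonfreeConsumer d (Function.update v i v') i then
          v i * d - 1 / (Kval (fun j => d * Function.update v i v' j) : ℝ) else 0)
          ≤ 0 := by
        split
        · rename_i h
          obtain ⟨h1, h2⟩ := h
          rw [key _ (hvupd v') h1 h2]
          have : d * v i = v i * d := mul_comm d (v i)
          push_neg at hwin
          linarith
        · exact le_refl 0
      linarith
    · rw [util, htn]
      linarith
end

section
/- Under the Bernoulli(1/2) valuation distribution (each agent's valuation is 0 or 1 with probability 1/2 each), the serial cost sharing mechanism's expected number of consumers is at most n/2 + 1, while the sequential take-it-or-leave-it mechanism (offer cost 1 to agents one by one until one accepts, then all subsequent agents consume for free) has expected number of consumers at least n - 2. -/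
/-- Number of consumers under the sequential take-it-or-leave-it mechanism with
Bernoulli valuations `v : Fin n → Bool`: the first agent with valuation `1`
accepts paying the full cost; she and all subsequent agents consume; agents
before her are excluded. If no agent values the project, nobody consumes. -/
def seqConsumers {n : ℕ} (v : Fin n → Bool) : ℕ :=
  if h : (Finset.univ.filter fun i : Fin n => v i = true).Nonempty then
    n - ((Finset.univ.filter fun i : Fin n => v i = true).min' h).val
  else 0

def bcons {n : ℕ} (b : Bool) (v : Fin n → Bool) : Fin (n+1) → Bool := Fin.cons b v

@[simp] lemma bcons_zero {n : ℕ} (b : Bool) (v : Fin n → Bool) : bcons b v 0 = b := rfl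
@[simp] lemma bcons_succ {n : ℕ} (b : Bool) (v : Fin n → Bool) (i : Fin n) :
    bcons b v i.succ = v i := by simp [bcons]

lemma sum_pi_succ {n : ℕ} {M : Type*} [AddCommMonoid M] (f : (Fin (n+1) → Bool) → M) :
    ∑ v : Fin (n+1) → Bool, f v
      = (∑ v : Fin n → Bool, f (bcons true v))
        + ∑ v : Fin n → Bool, f (bcons false v) := by
  rw [← (Fin.consEquiv (fun _ => Bool)).sum_comp f]
  rw [Fintype.sum_prod_type, Fintype.sum_bool]
  rfl

lemma card_filter_cons {n : ℕ} (b : Bool) (v : Fin n → Bool) :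
    (Finset.univ.filter fun i : Fin (n+1) => bcons b v i = true).card
      = (if b = true then 1 else 0)
        + (Finset.univ.filter fun i : Fin n => v i = true).card := by
  rw [Finset.card_filter, Fin.sum_univ_succ, Finset.card_filter]
  simp
  cases b <;> rfl

lemma sum_card (n : ℕ) :
    ∑ v : Fin n → Bool,
        ((Finset.univ.filter fun i : Fin n => v i = true).card : ℝ)
      = n * 2 ^ n / 2 := by
  induction n with
  | zero => simp
  | succ n ih =>
    rw [sum_pi_succ (fun v => ((Finset.univ.filter fun i : Fin (n+1) => v i = true).card : ℝ))]
    simp only [card_filter_cons, if_true, if_false]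
    push_cast
    rw [Finset.sum_add_distrib, Finset.sum_add_distrib, ih, Finset.sum_const,
      Finset.sum_const, Finset.card_univ]
    simp only [Fintype.card_fun, Fintype.card_bool, Fintype.card_fin]
    ring

lemma seq_cons_true {n : ℕ} (v : Fin n → Bool) :
    seqConsumers (bcons true v) = n + 1 := by
  have h0 : (0 : Fin (n+1)) ∈
      Finset.univ.filter fun i : Fin (n+1) => bcons true v i = true := by
    simp
  have hne : (Finset.univ.filter fun i : Fin (n+1) => bcons true v i = true).Nonempty :=
    ⟨0, h0⟩
  have hmin : (Finset.univ.filter fun i : Fin (n+1) => bcons true v i = true).min' hne = 0 :=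
    le_antisymm (Finset.min'_le _ _ h0) (Fin.zero_le _)
  rw [seqConsumers, dif_pos hne, hmin]
  simp

lemma filter_cons_false {n : ℕ} (v : Fin n → Bool) :
    (Finset.univ.filter fun i : Fin (n+1) => bcons false v i = true)
      = (Finset.univ.filter fun i : Fin n => v i = true).image Fin.succ := by
  ext i
  refine Fin.cases ?_ ?_ i <;> simp [Fin.succ_inj, Fin.succ_ne_zero]

lemma seq_cons_false {n : ℕ} (v : Fin n → Bool) :
    seqConsumers (bcons false v) = seqConsumers v := by
  unfold seqConsumers
  by_cases h : (Finset.univ.filter fun i : Fin n => v i = true).Nonempty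
  · have h' : (Finset.univ.filter fun i : Fin (n+1) => bcons false v i = true).Nonempty := by
      rw [filter_cons_false]; exact h.image _
    rw [dif_pos h', dif_pos h]
    have : (Finset.univ.filter fun i : Fin (n+1) => bcons false v i = true).min' h'
        = Fin.succ ((Finset.univ.filter fun i : Fin n => v i = true).min' h) := by
      refine le_antisymm ?_ ?_
      · apply Finset.min'_le
        simp only [Finset.mem_filter, Finset.mem_univ, true_and, bcons_succ]
        exact (Finset.mem_filter.mp (Finset.min'_mem _ h)).2
      · have hmem := Finset.min'_mem _ h'
        have hM0 : (Finset.univ.filter fun i : Fin (n+1) => bcons false v i = true).min' h' ≠ 0 := by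
          intro e
          have := (Finset.mem_filter.mp hmem).2
          rw [e] at this
          simp [bcons] at this
        obtain ⟨j, hj⟩ := Fin.exists_succ_eq.mpr hM0
        rw [← hj]
        have hvj : v j = true := by
          have := (Finset.mem_filter.mp hmem).2
          rw [← hj] at this
          simpa using this
        exact Fin.succ_le_succ_iff.mpr (Finset.min'_le _ _ (by simp [hvj]))
    rw [this, Fin.val_succ, Nat.succ_sub_succ]
  · have h' : ¬ (Finset.univ.filter fun i : Fin (n+1) => bcons false v i = true).Nonempty := by
      rw [filter_cons_false]
      simpa [Finset.image_nonempty] using h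
    rw [dif_neg h', dif_neg h]

lemma sum_seq (n : ℕ) :
    ∑ v : Fin n → Bool, (seqConsumers v : ℝ) = ((n : ℝ) - 1) * 2 ^ n + 1 := by
  induction n with
  | zero => simp [seqConsumers]
  | succ n ih =>
    rw [sum_pi_succ (fun v => ((seqConsumers v : ℝ)))]
    simp only [seq_cons_true, seq_cons_false]
    rw [ih, Finset.sum_const, Finset.card_univ]
    simp only [Fintype.card_fun, Fintype.card_bool, Fintype.card_fin]
    push_cast
    ring

/-- Under the Bernoulli(1/2) valuation distribution on `{0,1}`,
the serial cost sharing mechanism's expected number of consumers (the expected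
number of agents reporting `1`) is at most `n/2 + 1`, while the sequential
take-it-or-leave-it mechanism has expected number of consumers at least `n - 2`. -/
theorem stmt18 (n : ℕ) :
    (∑ v : Fin n → Bool,
        ((1:ℝ) / 2 ^ n) *
          ((Finset.univ.filter fun i : Fin n => v i = true).card : ℝ))
      ≤ (n : ℝ) / 2 + 1 ∧
    (n : ℝ) - 2 ≤
      ∑ v : Fin n → Bool, ((1:ℝ) / 2 ^ n) * (seqConsumers v : ℝ) := by
  have hp : (0:ℝ) < 2 ^ n := by positivity
  constructor
  · rw [← Finset.mul_sum, sum_card]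
    rw [div_mul_eq_mul_div, one_mul, div_le_iff₀ hp]
    nlinarith
  · rw [← Finset.mul_sum, sum_seq]
    rw [div_mul_eq_mul_div, one_mul, le_div_iff₀ hp]
    nlinarith
end
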